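/- A rational point q ∈ Q_1 is realized as the letter-frequency tuple (f_w(x))_{x∈X} of some nontrivial cyclic word w if and only if there is no letter x ∈ X with q_x > 0, q_{x^{−1}} > 0 and q_x + q_{x^{−1}} = 1. -/

import Mathlib

open Finset
noncomputable section
attribute [local instance] Classical.propDecidable

abbrev Letter (k : ℕ) := Fin k × Bool

def linv {k : ℕ} (x : Letter k) : Letter k := (x.1, !x.2)

/-- `w` is a freely reduced word: no letter is followed by its inverse. -/
def Reduced {k : ℕ} (w : List (Letter k)) : Prop :=
  ∀ i < w.length, w[i + 1]? ≠ (w[i]?).map linv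

/-- `w` is cyclically reduced. -/
def CyclRed {k : ℕ} (w : List (Letter k)) : Prop := Reduced (w ++ w)

/-- `w` and `w'` define the same cyclic word. -/
def CyclEq {k : ℕ} (w w' : List (Letter k)) : Prop := ∃ n, w' = w.rotate n

/-- the word `u` occurs in the cyclic word of `w` starting at position `i` (with wrap-around). -/
def occursAt {k : ℕ} (w u : List (Letter k)) (i : ℕ) : Prop :=
  ∀ j < u.length, w[(i + j) % w.length]? = u[j]?

/-- the number `n_w(u)` of cyclic occurrences of `u` in the cyclic word `w`. -/
def cyclCount {k : ℕ} (w u : List (Letter k)) : ℕ :=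
  ((Finset.range w.length).filter (occursAt w u)).card

/-- the frequency `f_w(u) = n_w(u)/‖w‖`. -/
def freq {k : ℕ} (w u : List (Letter k)) : ℚ := (cyclCount w u : ℚ) / (w.length : ℚ)

/-- the finite set of freely reduced words of length `m`. -/
def WordsM (k m : ℕ) : Finset (List (Letter k)) :=
  ((Finset.univ : Finset (Fin m → Letter k)).image fun f => List.ofFn f).filter
    (fun w => Reduced w)

/-- the polyhedron `Q_m`, realized as functions supported on reduced words of length `m`. -/
def Qset (k m : ℕ) : Set (List (Letter k) → ℝ) :=
  {q | (∀ v, ¬(Reduced v ∧ v.length = m) → q v = 0) ∧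
       (∀ v, 0 ≤ q v) ∧
       (∑ v ∈ WordsM k m, q v = 1) ∧
       ∀ u : List (Letter k), Reduced u → u.length = m - 1 →
         (∑ x ∈ Finset.univ.filter (fun x : Letter k => Reduced (u ++ [x])), q (u ++ [x])) =
         (∑ x ∈ Finset.univ.filter (fun x : Letter k => Reduced (x :: u)), q (x :: u)) }

-- basic facts
lemma linv_ne {k : ℕ} (x : Letter k) : x ≠ linv x := by
  simp [linv, Prod.ext_iff]

lemma linv_linv {k : ℕ} (x : Letter k) : linv (linv x) = x := by
  simp [linv]

lemma reduced_iff_chain' {k : ℕ} (w : List (Letter k)) :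
    Reduced w ↔ List.Chain' (fun a b => b ≠ linv a) w := by
  constructor
  · intro h
    simp only [List.Chain']
    rw [List.isChain_iff_getElem]
    intro i hi
    have h1 : i < w.length := by omega
    have h2 : i + 1 < w.length := by omega
    have := h i h1
    rw [List.getElem?_eq_getElem h2, List.getElem?_eq_getElem h1] at this
    simp only [Option.map_some, ne_eq, Option.some.injEq] at this
    simpa using this
  · intro h i hi
    by_cases h2 : i + 1 < w.length
    · simp only [List.Chain'] at h
      rw [List.isChain_iff_getElem] at h
      have := h i (by omega)
      rw [List.getElem?_eq_getElem h2, List.getElem?_eq_getElem hi]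
      simp only [Option.map_some, ne_eq, Option.some.injEq]
      simpa using this
    · rw [List.getElem?_eq_none (by omega), List.getElem?_eq_getElem hi]
      simp

lemma card_filter_getElem {k : ℕ} (w : List (Letter k)) (x : Letter k) :
    ((Finset.range w.length).filter (fun i => w[i]? = some x)).card = w.count x := by
  induction w with
  | nil => simp
  | cons a l ih =>
    rw [Finset.card_filter] at *
    rw [List.length_cons, Finset.sum_range_succ']
    simp only [List.getElem?_cons_succ, List.getElem?_cons_zero, Option.some.injEq]
    rw [ih, List.count_cons]
    congr 1
    simp only [beq_iff_eq]

lemma cyclCount_single {k : ℕ} (w : List (Letter k)) (x : Letter k) :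
    cyclCount w [x] = w.count x := by
  rw [cyclCount, ← card_filter_getElem]
  congr 1
  apply Finset.filter_congr
  intro i hi
  rw [Finset.mem_range] at hi
  simp only [occursAt]
  constructor
  · intro h
    have := h 0 (by simp)
    simpa [Nat.mod_eq_of_lt hi] using this
  · intro h j hj
    simp only [List.length_singleton] at hj
    obtain rfl : j = 0 := by omega
    simpa [Nat.mod_eq_of_lt hi] using h

lemma length_eq_sum_count {k : ℕ} (w : List (Letter k)) :
    w.length = ∑ y : Letter k, w.count y := by
  classical
  have h0 : w.length = (Finset.range w.length).card := by simp
  rw [h0, Finset.card_eq_sum_card_fiberwise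
    (f := fun i => w[i]?) (t := (Finset.univ : Finset (Option (Letter k))))
    (fun i _ => Finset.mem_univ _)]
  rw [Fintype.sum_option]
  have hnone : ((Finset.range w.length).filter (fun i => w[i]? = none)).card = 0 := by
    rw [Finset.card_eq_zero, Finset.filter_eq_empty_iff]
    intro i hi
    rw [Finset.mem_range] at hi
    simp [List.getElem?_eq_getElem hi]
  rw [hnone, zero_add]
  exact Finset.sum_congr rfl fun y _ => card_filter_getElem w y

-- helper: nodup list with head = last is a singleton
lemma nodup_head_last {α : Type*} {l : List α} (h : l.Nodup) {a : α}
    (h1 : l.head? = some a) (h2 : l.getLast? = some a) : l = [a] := by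
  match l with
  | [] => simp at h1
  | [b] =>
    simp only [List.head?_cons, Option.some.injEq] at h1
    rw [h1]
  | b :: c :: t =>
    simp only [List.head?_cons, Option.some.injEq] at h1
    rw [List.getLast?_cons_cons] at h2
    have hmem : a ∈ c :: t := List.mem_of_mem_getLast? h2
    rw [List.nodup_cons] at h
    exact absurd hmem (h1 ▸ h.1)

lemma exists_order {k : ℕ} (S : Finset (Letter k))
    (hS : ∀ x : Letter k, ¬(x ∈ S ∧ linv x ∈ S ∧ ∀ y ∈ S, y = x ∨ y = linv x)) :
    ∃ L : List (Letter k), L.Nodup ∧ (∀ z, z ∈ L ↔ z ∈ S) ∧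
      List.Chain' (fun a b => b ≠ linv a) L := by
  classical
  set Lf := (S.filter fun z => z.2 = false).toList with hLf
  set Lt := (S.filter fun z => z.2 = true).toList with hLt
  have hfmem : ∀ z, z ∈ Lf ↔ z ∈ S ∧ z.2 = false := by
    intro z; rw [hLf, Finset.mem_toList, Finset.mem_filter]
  have htmem : ∀ z, z ∈ Lt ↔ z ∈ S ∧ z.2 = true := by
    intro z; rw [hLt, Finset.mem_toList, Finset.mem_filter]
  have hfnd : Lf.Nodup := Finset.nodup_toList _
  have htnd : Lt.Nodup := Finset.nodup_toList _
  -- any list whose elements all have the same second component is a chain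
  have hchain : ∀ (l : List (Letter k)) (b : Bool), (∀ z ∈ l, z.2 = b) →
      List.Chain' (fun a c => c ≠ linv a) l := by
    intro l b hb
    apply List.Pairwise.isChain
    apply List.pairwise_of_forall_mem_list
    intro x hx y hy hxy
    have h1 := hb x hx
    have h2 := hb y hy
    rw [hxy] at h2
    simp [linv, h1] at h2
  -- the generic combination step
  have combine : ∀ (l1 l2 : List (Letter k)), l1.Nodup → l2.Nodup →
      (∀ z ∈ l1, z.2 = false) → (∀ z ∈ l2, z.2 = true) →
      (∀ a ∈ l1.getLast?, ∀ b ∈ l2.head?, b ≠ linv a) →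
      List.Nodup (l1 ++ l2) ∧ List.Chain' (fun a b => b ≠ linv a) (l1 ++ l2) := by
    intro l1 l2 h1 h2 hb1 hb2 hj
    constructor
    · rw [List.nodup_append]
      refine ⟨h1, h2, ?_⟩
      intro x hx1 y hx2 hxy
      subst hxy
      have e1 := hb1 x hx1
      have e2 := hb2 x hx2
      rw [e1] at e2
      exact absurd e2 (by simp)
    · simp only [List.Chain']
      rw [List.isChain_append]
      exact ⟨hchain l1 false hb1, hchain l2 true hb2, hj⟩
  -- try the four orders
  by_cases hJ1 : ∀ a ∈ Lf.getLast?, ∀ b ∈ Lt.head?, b ≠ linv a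
  · obtain ⟨hnd, hch⟩ := combine Lf Lt hfnd htnd (fun z hz => (hfmem z).1 hz |>.2)
      (fun z hz => (htmem z).1 hz |>.2) hJ1
    refine ⟨Lf ++ Lt, hnd, fun z => ?_, hch⟩
    rw [List.mem_append, hfmem, htmem]
    constructor
    · rintro (⟨h, _⟩ | ⟨h, _⟩) <;> exact h
    · intro h
      cases hb : z.2
      · exact Or.inl ⟨h, rfl⟩
      · exact Or.inr ⟨h, rfl⟩
  · push_neg at hJ1
    obtain ⟨a, ha, b, hb, hba⟩ := hJ1
    by_cases hJ2 : ∀ a' ∈ Lf.getLast?, ∀ b' ∈ Lt.reverse.head?, b' ≠ linv a'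
    · obtain ⟨hnd, hch⟩ := combine Lf Lt.reverse hfnd (List.nodup_reverse.2 htnd)
        (fun z hz => (hfmem z).1 hz |>.2)
        (fun z hz => (htmem z).1 (List.mem_reverse.1 hz) |>.2) hJ2
      refine ⟨Lf ++ Lt.reverse, hnd, fun z => ?_, hch⟩
      rw [List.mem_append, List.mem_reverse, hfmem, htmem]
      constructor
      · rintro (⟨h, _⟩ | ⟨h, _⟩) <;> exact h
      · intro h
        cases hb2 : z.2
        · exact Or.inl ⟨h, rfl⟩
        · exact Or.inr ⟨h, rfl⟩
    · push_neg at hJ2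
      obtain ⟨a', ha', b', hb', hba'⟩ := hJ2
      rw [Option.mem_def] at ha hb ha' hb'
      rw [List.head?_reverse] at hb'
      obtain rfl : a = a' := by
        have := ha.symm.trans ha'
        simpa using this
      subst hba'
      subst hba
      -- now hb : Lt.head? = some (linv a), hb' : Lt.getLast? = some (linv a)
      have hLtsing : Lt = [linv a] := nodup_head_last htnd hb hb'
      by_cases hJ3 : ∀ a'' ∈ Lf.reverse.getLast?, ∀ b'' ∈ Lt.head?, b'' ≠ linv a''
      · obtain ⟨hnd, hch⟩ := combine Lf.reverse Lt (List.nodup_reverse.2 hfnd) htnd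
          (fun z hz => (hfmem z).1 (List.mem_reverse.1 hz) |>.2)
          (fun z hz => (htmem z).1 hz |>.2) hJ3
        refine ⟨Lf.reverse ++ Lt, hnd, fun z => ?_, hch⟩
        rw [List.mem_append, List.mem_reverse, hfmem, htmem]
        constructor
        · rintro (⟨h, _⟩ | ⟨h, _⟩) <;> exact h
        · intro h
          cases hb2 : z.2
          · exact Or.inl ⟨h, rfl⟩
          · exact Or.inr ⟨h, rfl⟩
      · push_neg at hJ3
        obtain ⟨a'', ha'', b'', hb'', hba''⟩ := hJ3
        rw [Option.mem_def] at ha'' hb''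
        rw [List.getLast?_reverse] at ha''
        -- hb'' : Lt.head? = some b'', hb : Lt.head? = some (linv a)
        obtain rfl : b'' = linv a := by
          have := hb.symm.trans hb''
          simpa [eq_comm] using this
        -- hba'' : linv a = linv a''  → a = a''
        obtain rfl : a = a'' := by
          have h3 : linv (linv a) = linv (linv a'') := by rw [hba'']
          rwa [linv_linv, linv_linv] at h3
        -- head? Lf = getLast? Lf = some a, so Lf = [a]
        have hLfsing : Lf = [a] := nodup_head_last hfnd ha'' ha
        exfalso
        apply hS a
        have haS : a ∈ S := ((hfmem a).1 (by rw [hLfsing]; simp)).1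
        have hlaS : linv a ∈ S := ((htmem (linv a)).1 (by rw [hLtsing]; simp)).1
        refine ⟨haS, hlaS, fun y hy => ?_⟩
        cases hyb : y.2
        · have : y ∈ Lf := (hfmem y).2 ⟨hy, hyb⟩
          rw [hLfsing] at this
          simp only [List.mem_singleton] at this
          exact Or.inl this
        · have : y ∈ Lt := (htmem y).2 ⟨hy, hyb⟩
          rw [hLtsing] at this
          simp only [List.mem_singleton] at this
          exact Or.inr this

def blockWord {k : ℕ} (n : Letter k → ℕ) (L : List (Letter k)) : List (Letter k) :=
  (L.map fun z => List.replicate (n z) z).flatten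

lemma count_blockWord {k : ℕ} (n : Letter k → ℕ) (L : List (Letter k)) (hL : L.Nodup)
    (x : Letter k) : (blockWord n L).count x = if x ∈ L then n x else 0 := by
  induction L with
  | nil => simp [blockWord]
  | cons z L ih =>
    rw [List.nodup_cons] at hL
    have : blockWord n (z :: L) = List.replicate (n z) z ++ blockWord n L := by
      simp [blockWord]
    rw [this, List.count_append, List.count_replicate, ih hL.2]
    by_cases hxz : x = z
    · subst hxz
      simp [hL.1]
    · simp [hxz, Ne.symm hxz, beq_iff_eq]

lemma chain'_blockWord {k : ℕ} (n : Letter k → ℕ) (L : List (Letter k))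
    (hpos : ∀ z ∈ L, 0 < n z)
    (hch : List.Chain' (fun a b => b ≠ linv a) L) :
    List.Chain' (fun a b => b ≠ linv a) (blockWord n L) := by
  rw [blockWord]
  simp only [List.Chain']
  rw [List.isChain_flatten]
  · constructor
    · intro l hl
      rw [List.mem_map] at hl
      obtain ⟨z, hz, rfl⟩ := hl
      apply List.Pairwise.isChain
      apply List.pairwise_of_forall_mem_list
      intro a ha b hb
      rw [List.eq_of_mem_replicate ha, List.eq_of_mem_replicate hb]
      exact linv_ne z
    · rw [List.isChain_map]
      apply hch.imp
      intro a b hab x hx y hy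
      have hxa : x = a := List.eq_of_mem_replicate (List.mem_of_mem_getLast? hx)
      have hyb : y = b := List.eq_of_mem_replicate (by
        have := hy
        rw [Option.mem_def] at this
        exact List.mem_of_mem_head? this)
      rw [hxa, hyb]
      exact hab
  · intro hmem
    rw [List.mem_map] at hmem
    obtain ⟨z, hz, hrep⟩ := hmem
    have := hpos z hz
    rw [List.replicate_eq_nil_iff] at hrep
    omega

lemma chain'_flip_linv {k : ℕ} {w : List (Letter k)}
    (h : List.Chain' (fun a b => b ≠ linv a) w) :
    List.Chain' (fun a b => b ≠ linv a) w.reverse := by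
  simp only [List.Chain']
  rw [List.isChain_reverse]
  apply h.imp
  intro a b hab
  intro hcon
  apply hab
  rw [hcon, linv_linv]

lemma cyclred_palindrome {k : ℕ} {w : List (Letter k)} (hw : w ≠ [])
    (h : List.Chain' (fun a b => b ≠ linv a) w) : CyclRed (w ++ w.reverse) := by
  have hrevne : w.reverse ≠ [] := by simpa using hw
  have hj1 : ∀ x ∈ w.getLast?, ∀ y ∈ w.reverse.head?, y ≠ linv x := by
    intro x hx y hy
    rw [List.head?_reverse] at hy
    rw [Option.mem_def] at hx hy
    obtain rfl : x = y := by rw [hx] at hy; injection hy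
    exact linv_ne x
  have hWchain : List.Chain' (fun a b => b ≠ linv a) (w ++ w.reverse) :=
    List.isChain_append.2 ⟨h, chain'_flip_linv h, hj1⟩
  rw [CyclRed, reduced_iff_chain']
  apply List.isChain_append.2
  refine ⟨hWchain, hWchain, ?_⟩
  intro x hx y hy
  rw [Option.mem_def, List.getLast?_append_of_ne_nil _ hrevne, List.getLast?_reverse] at hx
  rw [Option.mem_def, List.head?_append_of_ne_nil _ hw] at hy
  obtain rfl : x = y := by rw [hx] at hy; injection hy
  exact linv_ne x

lemma chain'_imp_mem {α : Type*} {R S : α → α → Prop} :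
    ∀ {l : List α}, List.Chain' R l → (∀ a ∈ l, ∀ b ∈ l, R a b → S a b) → List.Chain' S l := by
  intro l
  induction l with
  | nil => intro _ _; exact List.IsChain.nil
  | cons c t ih =>
    intro h himp
    simp only [List.Chain'] at h ⊢
    rw [List.isChain_cons] at h ⊢
    refine ⟨?_, ih h.2 (fun a ha b hb => himp a (by simp [ha]) b (by simp [hb]))⟩
    intro y hy
    exact himp c (by simp) y (by simp [List.mem_of_mem_head? hy]) (h.1 y hy)

lemma chain'_eq_all {α : Type*} :
    ∀ {l : List α}, List.Chain' (· = ·) l → ∀ a ∈ l, ∀ b ∈ l, a = b := by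
  intro l
  induction l with
  | nil => simp
  | cons c t ih =>
    intro h
    simp only [List.Chain'] at h
    rw [List.isChain_cons] at h
    have hc : ∀ a ∈ c :: t, a = c := by
      intro a ha
      rcases List.mem_cons.1 ha with rfl | ha
      · rfl
      · cases ht : t.head? with
        | none => rw [List.head?_eq_none_iff] at ht; subst ht; simp at ha
        | some y =>
          have hy : y ∈ t := List.mem_of_mem_head? ht
          exact (ih h.2 a ha y hy).trans (h.1 y ht).symm
    intro a ha b hb
    rw [hc a ha, hc b hb]

lemma forward_aux {k : ℕ} (w : List (Letter k)) (hw : CyclRed w) (x : Letter k)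
    (hx : 0 < w.count x) (hx' : 0 < w.count (linv x))
    (hsum : w.count x + w.count (linv x) = w.length) : False := by
  classical
  have hmemx : x ∈ w := List.count_pos_iff.1 hx
  have hmemx' : linv x ∈ w := List.count_pos_iff.1 hx'
  -- all other counts vanish
  have hsplit : ∑ y ∈ (Finset.univ \ {x, linv x} : Finset (Letter k)), w.count y
      + (w.count x + w.count (linv x)) = ∑ y : Letter k, w.count y := by
    simpa [Finset.sum_pair (linv_ne x)] using
      Finset.sum_sdiff (f := fun y => w.count y)
        (Finset.subset_univ ({x, linv x} : Finset (Letter k)))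
  have htot := length_eq_sum_count w
  have hrest : ∑ y ∈ (Finset.univ \ {x, linv x} : Finset (Letter k)), w.count y = 0 := by omega
  have hall : ∀ z ∈ w, z = x ∨ z = linv x := by
    intro z hz
    by_contra hcon
    push_neg at hcon
    have hzmem : z ∈ (Finset.univ \ {x, linv x} : Finset (Letter k)) := by
      simp [hcon.1, hcon.2]
    have := (Finset.sum_eq_zero_iff.1 hrest) z hzmem
    rw [List.count_eq_zero] at this
    exact this hz
  -- the cyclic chain forces all letters equal
  have hch : List.Chain' (fun a b => b ≠ linv a) (w ++ w) := (reduced_iff_chain' _).1 hw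
  have hEq : List.Chain' (· = ·) (w ++ w) := by
    apply chain'_imp_mem hch
    intro a ha b hb hab
    rw [List.mem_append] at ha hb
    have ha' := hall a (ha.elim id id)
    have hb' := hall b (hb.elim id id)
    rcases ha' with rfl | rfl
    · rcases hb' with rfl | h2
      · rfl
      · exact absurd h2 hab
    · rcases hb' with h2 | h2
      · exfalso
        apply hab
        rw [h2, linv_linv]
      · exact h2.symm
  have : x = linv x := chain'_eq_all hEq x (by simp [hmemx]) (linv x) (by simp [hmemx'])
  exact linv_ne x this

lemma reduced_singleton {k : ℕ} (x : Letter k) : Reduced [x] := by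
  intro i hi
  simp only [List.length_singleton] at hi
  obtain rfl : i = 0 := by omega
  simp

lemma wordsM_one (k : ℕ) : WordsM k 1 = Finset.univ.image (fun x : Letter k => [x]) := by
  ext w
  simp only [WordsM, Finset.mem_filter, Finset.mem_image, Finset.mem_univ, true_and]
  constructor
  · rintro ⟨⟨f, rfl⟩, _⟩
    exact ⟨f 0, by simp [List.ofFn_succ]⟩
  · rintro ⟨x, rfl⟩
    exact ⟨⟨fun _ => x, by simp [List.ofFn_succ]⟩, reduced_singleton x⟩

theorem stmt13 (k : ℕ) (hk : 2 ≤ k) (q : List (Letter k) → ℝ) (hq : q ∈ Qset k 1)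
    (hrat : ∀ v, ∃ r : ℚ, q v = (r : ℝ)) :
    (∃ w : List (Letter k), CyclRed w ∧ w ≠ [] ∧
        ∀ x : Letter k, q [x] = ((freq w [x] : ℚ) : ℝ)) ↔
      ¬ ∃ x : Letter k, 0 < q [x] ∧ 0 < q [linv x] ∧ q [x] + q [linv x] = 1 := by
  classical
  obtain ⟨hzero, hnn, hsum, -⟩ := hq
  have hsum1 : ∑ x : Letter k, q [x] = 1 := by
    rw [wordsM_one k, Finset.sum_image (by intro a _ b _ h; injection h)] at hsum
    exact hsum
  constructor
  · rintro ⟨w, hcr, hne, hfw⟩ ⟨x, hx1, hx2, hx3⟩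
    have hlenpos : 0 < w.length := List.length_pos_iff.2 hne
    have e : ∀ y : Letter k, q [y] = (((w.count y : ℚ) / (w.length : ℚ) : ℚ) : ℝ) := by
      intro y
      rw [hfw y, freq, cyclCount_single]
    have hcx : 0 < w.count x := by
      by_contra h
      push_neg at h
      have h0 : w.count x = 0 := by omega
      rw [e x, h0] at hx1
      simp at hx1
    have hcx' : 0 < w.count (linv x) := by
      by_contra h
      push_neg at h
      have h0 : w.count (linv x) = 0 := by omega
      rw [e (linv x), h0] at hx2
      simp at hx2
    have hnat : w.count x + w.count (linv x) = w.length := by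
      rw [e x, e (linv x)] at hx3
      have hlq : ((w.length : ℚ) : ℝ) ≠ 0 := by
        push_cast
        positivity
      have h3 : ((w.count x : ℚ) : ℝ) / ((w.length : ℚ) : ℝ)
          + ((w.count (linv x) : ℚ) : ℝ) / ((w.length : ℚ) : ℝ) = 1 := by
        push_cast at hx3 ⊢
        convert hx3 using 2 <;> norm_cast
      rw [← add_div, div_eq_one_iff_eq hlq] at h3
      exact_mod_cast h3
    exact forward_aux w hcr x hcx hcx' hnat
  · intro hno
    choose r hr using fun x : Letter k => hrat [x]
    have hrnn : ∀ x, 0 ≤ r x := by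
      intro x
      have := hnn [x]
      rw [hr x] at this
      exact_mod_cast this
    have hrsum : ∑ x : Letter k, r x = 1 := by
      have h1 : ((∑ x : Letter k, r x : ℚ) : ℝ) = 1 := by
        push_cast
        rw [← hsum1]
        exact Finset.sum_congr rfl fun x _ => (hr x).symm
      exact_mod_cast h1
    set N : ℕ := ∏ x : Letter k, (r x).den with hN
    have hNpos : 0 < N := Finset.prod_pos fun x _ => (r x).den_pos
    have hdvd : ∀ x : Letter k, (r x).den ∣ N := fun x =>
      Finset.dvd_prod_of_mem _ (Finset.mem_univ x)
    set n : Letter k → ℕ := fun x => (r x).num.toNat * (N / (r x).den) with hn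
    have key : ∀ x, (n x : ℚ) = r x * N := by
      intro x
      obtain ⟨t, ht⟩ := hdvd x
      have hdenpos := (r x).den_pos
      have htpos : 0 < t := by
        rcases Nat.eq_zero_or_pos t with h | h
        · rw [h, Nat.mul_zero] at ht
          omega
        · exact h
      have hdivt : N / (r x).den = t := by
        rw [ht]
        exact Nat.mul_div_cancel_left _ hdenpos
      have h1 : ((r x).num.toNat : ℚ) = ((r x).num : ℚ) := by
        exact_mod_cast congrArg (Int.cast : ℤ → ℚ)
          (Int.toNat_of_nonneg (Rat.num_nonneg.2 (hrnn x)))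
      have h2 : (r x) * N = ((r x).num : ℚ) * t := by
        calc (r x) * N = (r x * ((r x).den : ℚ)) * (t : ℚ) := by
              rw [ht]; push_cast; ring
        _ = ((r x).num : ℚ) * t := by rw [Rat.mul_den_eq_num]
      rw [hn, h2]
      push_cast [hdivt]
      rw [h1]
    have hsumn : ∑ x : Letter k, n x = N := by
      have h1 : ((∑ x : Letter k, n x : ℕ) : ℚ) = ((N : ℕ) : ℚ) := by
        push_cast
        rw [Finset.sum_congr rfl fun x _ => key x, ← Finset.sum_mul, hrsum, one_mul]
      exact_mod_cast h1
    have hposr : ∀ x, 0 < n x ↔ 0 < r x := by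
      intro x
      rw [← Nat.cast_pos (α := ℚ), key x]
      have hNq : (0:ℚ) < N := by exact_mod_cast hNpos
      constructor <;> intro h <;> nlinarith
    set S : Finset (Letter k) := Finset.univ.filter (fun x => 0 < n x) with hS
    have hmemS : ∀ x, x ∈ S ↔ 0 < n x := by
      intro x
      rw [hS, Finset.mem_filter]
      simp
    have hqpos : ∀ x, 0 < q [x] ↔ 0 < n x := by
      intro x
      rw [hr x, hposr x]
      exact_mod_cast Iff.rfl
    have hSnp : ∀ x : Letter k, ¬(x ∈ S ∧ linv x ∈ S ∧ ∀ y ∈ S, y = x ∨ y = linv x) := by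
      rintro x ⟨hx1, hx2, hall⟩
      apply hno
      refine ⟨x, (hqpos x).2 ((hmemS x).1 hx1), (hqpos (linv x)).2 ((hmemS (linv x)).1 hx2), ?_⟩
      have hzero' : ∀ y : Letter k, y ∉ ({x, linv x} : Finset (Letter k)) → r y = 0 := by
        intro y hy
        simp only [Finset.mem_insert, Finset.mem_singleton] at hy
        push_neg at hy
        by_contra hry
        have hry' : 0 < r y := lt_of_le_of_ne (hrnn y) (Ne.symm hry)
        have : y ∈ S := (hmemS y).2 ((hposr y).2 hry')
        rcases hall y this with h | h
        · exact hy.1 h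
        · exact hy.2 h
      have hpair : r x + r (linv x) = 1 := by
        rw [← hrsum, ← Finset.sum_pair (linv_ne x)]
        exact Finset.sum_subset (Finset.subset_univ _) (fun y _ hy => hzero' y hy)
      rw [hr x, hr (linv x)]
      exact_mod_cast congrArg (Rat.cast : ℚ → ℝ) hpair
    obtain ⟨L, hLnd, hLmem, hLch⟩ := exists_order S hSnp
    set w0 := blockWord n L with hw0
    have hcnt : ∀ x, w0.count x = n x := by
      intro x
      rw [hw0, count_blockWord n L hLnd]
      by_cases hx : x ∈ L
      · simp [hx]
      · have : ¬ 0 < n x := fun h => hx ((hLmem x).2 ((hmemS x).2 h))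
        simp [hx]
        omega
    have hlen0 : w0.length = N := by
      rw [length_eq_sum_count]
      rw [Finset.sum_congr rfl fun x _ => hcnt x]
      exact hsumn
    have hw0ne : w0 ≠ [] := by
      intro h
      rw [h] at hlen0
      simp at hlen0
      omega
    have hcr : CyclRed (w0 ++ w0.reverse) := by
      apply cyclred_palindrome hw0ne
      rw [hw0]
      apply chain'_blockWord n L _ hLch
      intro z hz
      exact (hmemS z).1 ((hLmem z).1 hz)
    refine ⟨w0 ++ w0.reverse, hcr, ?_, fun x => ?_⟩
    · intro h
      rw [← List.length_eq_zero_iff] at h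
      rw [List.length_append, List.length_reverse, hlen0] at h
      omega
    · rw [freq, cyclCount_single]
      have hWcount : (w0 ++ w0.reverse).count x = 2 * n x := by
        rw [List.count_append, List.count_reverse, hcnt]
        omega
      have hWlen : (w0 ++ w0.reverse).length = 2 * N := by
        rw [List.length_append, List.length_reverse, hlen0]
        omega
      rw [hWcount, hWlen, hr x]
      have hQeq : r x = ((2 * n x : ℕ) : ℚ) / ((2 * N : ℕ) : ℚ) := by
        have hN0 : ((N : ℚ)) ≠ 0 := by positivity
        push_cast
        rw [key x]
        field_simp
      exact congrArg (Rat.cast : ℚ → ℝ) hQeq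

end
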